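/- Let n ≥ 1, Ω ⊂ ℝⁿ open and bounded, ε > 0, λ̄ ∈ (0,1), and W̃ : ℝ → [0,1] Lipschitz with constant L. Then there exists a constant C, depending only on ε, L and the Lebesgue measure of Ω, such that for all bounded continuous u₁, u₂ : Ω → ℝ, | inf_φ A_{u₁,ε}(φ) − inf_φ A_{u₂,ε}(φ) | ≤ C ‖u₁ − u₂‖_∞, where both infima are taken over the admissible class of continuously differentiable φ : Ω → ℝ with φ, W(φ) and |∇φ|^2 Lebesgue integrable on Ω. In particular, the map u ↦ inf_φ A_{u,ε}(φ) is Lipschitz continuous with respect to the supremum norm. -/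

import Mathlib

open MeasureTheory

/-- The double-well potential `W(s) = (1/4)(1-s²)²`. -/
noncomputable def W (s : ℝ) : ℝ := (1 / 4) * (1 - s ^ 2) ^ 2

/-- The component-detecting functional
`A_{u,ε}(φ) = |∫_Ω (1/ε) W̃(u) φ| + ∫_Ω (9ε^{-3/2} W̃(λ̄u) + ε) W(φ) + ∫_Ω (8ε^{-3/2} W̃(λ̄u) + ε) |∇φ|²`. -/
noncomputable def Afun {n : ℕ} (Ω : Set (EuclideanSpace ℝ (Fin n))) (ε lamb : ℝ)
    (Wt : ℝ → ℝ) (u φ : EuclideanSpace ℝ (Fin n) → ℝ) : ℝ :=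
  |∫ x in Ω, (1 / ε) * Wt (u x) * φ x| +
    (∫ x in Ω, (9 * ε ^ (-(3 : ℝ) / 2) * Wt (lamb * u x) + ε) * W (φ x)) +
    ∫ x in Ω, (8 * ε ^ (-(3 : ℝ) / 2) * Wt (lamb * u x) + ε) * ‖fderiv ℝ φ x‖ ^ 2

/-- The admissible class: continuously differentiable `φ` with `φ`, `W(φ)` and `|∇φ|²`
Lebesgue integrable on `Ω`. -/
def AdmSet {n : ℕ} (Ω : Set (EuclideanSpace ℝ (Fin n))) :
    Set (EuclideanSpace ℝ (Fin n) → ℝ) :=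
  {φ | ContDiff ℝ 1 φ ∧ IntegrableOn φ Ω ∧ IntegrableOn (fun x => W (φ x)) Ω ∧
    IntegrableOn (fun x => ‖fderiv ℝ φ x‖ ^ 2) Ω}

lemma W_nonneg (s : ℝ) : 0 ≤ W s := by unfold W; positivity

lemma W_zero : W 0 = 1 / 4 := by norm_num [W]

lemma abs_le_three_add_W (s : ℝ) : |s| ≤ 3 + W s := by
  unfold W
  rcases abs_cases s with ⟨h, _⟩ | ⟨h, _⟩ <;> rw [h] <;>
    nlinarith [sq_nonneg (s ^ 2 - 2), sq_nonneg (s - 1), sq_nonneg (s + 1)]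

section helpers

variable {n : ℕ} {Ω : Set (EuclideanSpace ℝ (Fin n))} {ε lamb L : ℝ} {Wt : ℝ → ℝ}

lemma int_term1 (hε : 0 < ε) (hWt01 : ∀ s, Wt s ∈ Set.Icc (0 : ℝ) 1) (hWtc : Continuous Wt)
    {u φ : EuclideanSpace ℝ (Fin n) → ℝ} (hu : Continuous u) (hφ : IntegrableOn φ Ω) :
    IntegrableOn (fun x => (1 / ε) * Wt (u x) * φ x) Ω := by
  have hcont : Continuous fun x => (1 / ε) * Wt (u x) :=
    continuous_const.mul (hWtc.comp hu)
  apply hφ.bdd_mul (c := 1 / ε) hcont.aestronglyMeasurable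
  refine Filter.Eventually.of_forall fun x => ?_
  rw [Real.norm_eq_abs, abs_mul, abs_of_pos (by positivity : (0:ℝ) < 1 / ε),
    abs_of_nonneg (hWt01 _).1]
  calc (1 / ε) * Wt (u x) ≤ (1 / ε) * 1 := by gcongr; exact (hWt01 _).2
    _ = 1 / ε := mul_one _

lemma int_coef_mul (hε : 0 < ε) (hWt01 : ∀ s, Wt s ∈ Set.Icc (0 : ℝ) 1) (hWtc : Continuous Wt)
    {u g : EuclideanSpace ℝ (Fin n) → ℝ} (hu : Continuous u) (hg : IntegrableOn g Ω)
    (a : ℝ) (ha : 0 ≤ a) :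
    IntegrableOn (fun x => (a * ε ^ (-(3 : ℝ) / 2) * Wt (lamb * u x) + ε) * g x) Ω := by
  have hc : 0 < ε ^ (-(3:ℝ)/2) := Real.rpow_pos_of_pos hε _
  have hcont : Continuous fun x => a * ε ^ (-(3 : ℝ) / 2) * Wt (lamb * u x) + ε :=
    (continuous_const.mul (hWtc.comp (continuous_const.mul hu))).add continuous_const
  apply hg.bdd_mul (c := a * ε ^ (-(3:ℝ)/2) + ε) hcont.aestronglyMeasurable
  refine Filter.Eventually.of_forall fun x => ?_
  have h1 := (hWt01 (lamb * u x)).1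
  have h2 := (hWt01 (lamb * u x)).2
  rw [Real.norm_eq_abs, abs_of_nonneg (by positivity)]
  nlinarith [mul_nonneg (mul_nonneg ha hc.le) (sub_nonneg.2 h2)]

lemma Afun_nonneg (hΩm : MeasurableSet Ω) (hε : 0 < ε)
    (hWt01 : ∀ s, Wt s ∈ Set.Icc (0 : ℝ) 1)
    (u φ : EuclideanSpace ℝ (Fin n) → ℝ) : 0 ≤ Afun Ω ε lamb Wt u φ := by
  have hc : 0 < ε ^ (-(3:ℝ)/2) := Real.rpow_pos_of_pos hε _
  have h2 : 0 ≤ ∫ x in Ω, (9 * ε ^ (-(3 : ℝ) / 2) * Wt (lamb * u x) + ε) * W (φ x) := by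
    apply setIntegral_nonneg hΩm
    intro x _
    have := (hWt01 (lamb * u x)).1
    have := W_nonneg (φ x)
    positivity
  have h3 : 0 ≤ ∫ x in Ω, (8 * ε ^ (-(3 : ℝ) / 2) * Wt (lamb * u x) + ε) * ‖fderiv ℝ φ x‖ ^ 2 := by
    apply setIntegral_nonneg hΩm
    intro x _
    have := (hWt01 (lamb * u x)).1
    positivity
  have h1 : 0 ≤ |∫ x in Ω, (1 / ε) * Wt (u x) * φ x| := abs_nonneg _
  unfold Afun; linarith

lemma zero_mem_AdmSet (hμ : volume Ω < ⊤) : (fun _ => (0:ℝ)) ∈ AdmSet Ω := by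
  refine ⟨contDiff_const, ?_, ?_, ?_⟩
  · exact integrableOn_const hμ.ne
  · simp only [W_zero]
    exact integrableOn_const hμ.ne
  · have : (fun x : EuclideanSpace ℝ (Fin n) =>
        ‖fderiv ℝ (fun _ : EuclideanSpace ℝ (Fin n) => (0:ℝ)) x‖ ^ 2) = fun _ => (0:ℝ) := by
      funext x
      simp [fderiv_const]
    rw [this]
    exact integrableOn_const hμ.ne

lemma Afun_zero_le (hΩm : MeasurableSet Ω) (hμ : volume Ω < ⊤) (hε : 0 < ε)
    (hWt01 : ∀ s, Wt s ∈ Set.Icc (0 : ℝ) 1) (hWtc : Continuous Wt)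
    {u : EuclideanSpace ℝ (Fin n) → ℝ} (hu : Continuous u) :
    Afun Ω ε lamb Wt u (fun _ => 0) ≤
      (9 * ε ^ (-(3 : ℝ) / 2) + ε) / 4 * (volume Ω).toReal := by
  have hc : 0 < ε ^ (-(3:ℝ)/2) := Real.rpow_pos_of_pos hε _
  unfold Afun
  have h1 : (∫ x in Ω, (1 / ε) * Wt (u x) * (fun _ : EuclideanSpace ℝ (Fin n) => (0:ℝ)) x) = 0 := by
    simp
  have h3 : (∫ x in Ω, (8 * ε ^ (-(3 : ℝ) / 2) * Wt (lamb * u x) + ε) *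
      ‖fderiv ℝ (fun _ : EuclideanSpace ℝ (Fin n) => (0:ℝ)) x‖ ^ 2) = 0 := by
    simp [fderiv_const]
  rw [h1, h3]
  simp only [abs_zero, add_zero, zero_add]
  have h2 : (∫ x in Ω, (9 * ε ^ (-(3 : ℝ) / 2) * Wt (lamb * u x) + ε) *
      W ((fun _ : EuclideanSpace ℝ (Fin n) => (0:ℝ)) x))
      ≤ ∫ _x in Ω, (9 * ε ^ (-(3 : ℝ) / 2) + ε) * (1/4 : ℝ) := by
    apply setIntegral_mono_on
    · have : IntegrableOn (fun x : EuclideanSpace ℝ (Fin n) => W (0:ℝ)) Ω := by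
        rw [W_zero]; exact integrableOn_const hμ.ne
      exact int_coef_mul hε hWt01 hWtc hu this 9 (by norm_num)
    · exact integrableOn_const hμ.ne
    · exact hΩm
    · intro x _
      have h1 := (hWt01 (lamb * u x)).1
      have h2 := (hWt01 (lamb * u x)).2
      rw [W_zero]
      nlinarith [mul_nonneg hc.le (sub_nonneg.2 h2)]
  calc _ ≤ ∫ _x in Ω, (9 * ε ^ (-(3 : ℝ) / 2) + ε) * (1/4 : ℝ) := h2
    _ = (volume Ω).toReal • ((9 * ε ^ (-(3 : ℝ) / 2) + ε) * (1/4 : ℝ)) := setIntegral_const _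
    _ = (9 * ε ^ (-(3 : ℝ) / 2) + ε) / 4 * (volume Ω).toReal := by
        rw [smul_eq_mul]; ring

/-- `ε ∫ W(φ) ≤ A(u,φ)`. -/
lemma intW_le (hΩm : MeasurableSet Ω) (hε : 0 < ε)
    (hWt01 : ∀ s, Wt s ∈ Set.Icc (0 : ℝ) 1) (hWtc : Continuous Wt)
    {u φ : EuclideanSpace ℝ (Fin n) → ℝ} (hu : Continuous u) (hφ : φ ∈ AdmSet Ω) :
    ε * (∫ x in Ω, W (φ x)) ≤ Afun Ω ε lamb Wt u φ := by
  have hc : 0 < ε ^ (-(3:ℝ)/2) := Real.rpow_pos_of_pos hε _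
  obtain ⟨-, hφi, hWi, hGi⟩ := hφ
  have h1 : 0 ≤ |∫ x in Ω, (1 / ε) * Wt (u x) * φ x| := abs_nonneg _
  have h3 : 0 ≤ ∫ x in Ω, (8 * ε ^ (-(3 : ℝ) / 2) * Wt (lamb * u x) + ε) * ‖fderiv ℝ φ x‖ ^ 2 := by
    apply setIntegral_nonneg hΩm
    intro x _
    have := (hWt01 (lamb * u x)).1
    positivity
  have h2 : (∫ x in Ω, ε * W (φ x)) ≤
      ∫ x in Ω, (9 * ε ^ (-(3 : ℝ) / 2) * Wt (lamb * u x) + ε) * W (φ x) := by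
    apply setIntegral_mono_on (hWi.const_mul ε) (int_coef_mul hε hWt01 hWtc hu hWi 9 (by norm_num)) hΩm
    intro x _
    have hw := W_nonneg (φ x)
    have h0 := (hWt01 (lamb * u x)).1
    nlinarith [mul_nonneg (mul_nonneg hc.le h0) hw]
  rw [integral_const_mul] at h2
  unfold Afun
  linarith

/-- `ε ∫ ‖∇φ‖² ≤ A(u,φ)`. -/
lemma intG_le (hΩm : MeasurableSet Ω) (hε : 0 < ε)
    (hWt01 : ∀ s, Wt s ∈ Set.Icc (0 : ℝ) 1) (hWtc : Continuous Wt)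
    {u φ : EuclideanSpace ℝ (Fin n) → ℝ} (hu : Continuous u) (hφ : φ ∈ AdmSet Ω) :
    ε * (∫ x in Ω, ‖fderiv ℝ φ x‖ ^ 2) ≤ Afun Ω ε lamb Wt u φ := by
  have hc : 0 < ε ^ (-(3:ℝ)/2) := Real.rpow_pos_of_pos hε _
  obtain ⟨-, hφi, hWi, hGi⟩ := hφ
  have h1 : 0 ≤ |∫ x in Ω, (1 / ε) * Wt (u x) * φ x| := abs_nonneg _
  have h2 : 0 ≤ ∫ x in Ω, (9 * ε ^ (-(3 : ℝ) / 2) * Wt (lamb * u x) + ε) * W (φ x) := by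
    apply setIntegral_nonneg hΩm
    intro x _
    have := (hWt01 (lamb * u x)).1
    have := W_nonneg (φ x)
    positivity
  have h3 : (∫ x in Ω, ε * ‖fderiv ℝ φ x‖ ^ 2) ≤
      ∫ x in Ω, (8 * ε ^ (-(3 : ℝ) / 2) * Wt (lamb * u x) + ε) * ‖fderiv ℝ φ x‖ ^ 2 := by
    apply setIntegral_mono_on (hGi.const_mul ε) (int_coef_mul hε hWt01 hWtc hu hGi 8 (by norm_num)) hΩm
    intro x _
    have hg : (0:ℝ) ≤ ‖fderiv ℝ φ x‖ ^ 2 := by positivity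
    have h0 := (hWt01 (lamb * u x)).1
    nlinarith [mul_nonneg (mul_nonneg hc.le h0) hg]
  rw [integral_const_mul] at h3
  unfold Afun
  linarith

/-- `∫ |φ| ≤ 3 |Ω| + ∫ W(φ)`. -/
lemma int_abs_le (hΩm : MeasurableSet Ω) (hμ : volume Ω < ⊤)
    {φ : EuclideanSpace ℝ (Fin n) → ℝ} (hφi : IntegrableOn φ Ω)
    (hWi : IntegrableOn (fun x => W (φ x)) Ω) :
    (∫ x in Ω, |φ x|) ≤ 3 * (volume Ω).toReal + ∫ x in Ω, W (φ x) := by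
  have h : (∫ x in Ω, |φ x|) ≤ ∫ x in Ω, (3 + W (φ x)) := by
    apply setIntegral_mono_on hφi.abs
      ((integrableOn_const hμ.ne).add hWi) hΩm
    intro x _
    exact abs_le_three_add_W (φ x)
  calc (∫ x in Ω, |φ x|) ≤ ∫ x in Ω, (3 + W (φ x)) := h
    _ = (∫ _x in Ω, (3:ℝ)) + ∫ x in Ω, W (φ x) :=
        integral_add (integrableOn_const hμ.ne) hWi
    _ = 3 * (volume Ω).toReal + ∫ x in Ω, W (φ x) := by
        rw [setIntegral_const, smul_eq_mul, mul_comm, measureReal_def]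

/-- The key per-`φ` estimate. -/
lemma Afun_diff_le (hΩm : MeasurableSet Ω) (hε : 0 < ε)
    (hl0 : 0 < lamb) (hl1 : lamb < 1) (hL : 0 ≤ L)
    (hWt01 : ∀ s, Wt s ∈ Set.Icc (0 : ℝ) 1)
    (hWtLip : ∀ s t : ℝ, |Wt s - Wt t| ≤ L * |s - t|) (hWtc : Continuous Wt)
    {u₁ u₂ φ : EuclideanSpace ℝ (Fin n) → ℝ} (hu₁ : Continuous u₁) (hu₂ : Continuous u₂)
    (hφ : φ ∈ AdmSet Ω) {M : ℝ} (hM : 0 ≤ M) (hd : ∀ x ∈ Ω, |u₁ x - u₂ x| ≤ M) :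
    Afun Ω ε lamb Wt u₁ φ ≤ Afun Ω ε lamb Wt u₂ φ +
      L * M * ((1 / ε) * (∫ x in Ω, |φ x|) + 9 * ε ^ (-(3:ℝ)/2) * (∫ x in Ω, W (φ x))
        + 8 * ε ^ (-(3:ℝ)/2) * (∫ x in Ω, ‖fderiv ℝ φ x‖ ^ 2)) := by
  have hc : 0 < ε ^ (-(3:ℝ)/2) := Real.rpow_pos_of_pos hε _
  obtain ⟨-, hφi, hWi, hGi⟩ := hφ
  -- pointwise bound on `Wt (lamb * u₁ x) - Wt (lamb * u₂ x)` on Ω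
  have hpt : ∀ x ∈ Ω, Wt (lamb * u₁ x) - Wt (lamb * u₂ x) ≤ L * M := by
    intro x hx
    calc Wt (lamb * u₁ x) - Wt (lamb * u₂ x) ≤ |Wt (lamb * u₁ x) - Wt (lamb * u₂ x)| :=
          le_abs_self _
      _ ≤ L * |lamb * u₁ x - lamb * u₂ x| := hWtLip _ _
      _ = L * (lamb * |u₁ x - u₂ x|) := by
          rw [← mul_sub, abs_mul, abs_of_pos hl0]
      _ ≤ L * M := by
          apply mul_le_mul_of_nonneg_left _ hL
          calc lamb * |u₁ x - u₂ x| ≤ 1 * M := by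
                apply mul_le_mul hl1.le (hd x hx) (abs_nonneg _) zero_le_one
            _ = M := one_mul M
  -- Term 1
  have h1 : |∫ x in Ω, (1 / ε) * Wt (u₁ x) * φ x| ≤
      |∫ x in Ω, (1 / ε) * Wt (u₂ x) * φ x| +
        L * M * ((1 / ε) * ∫ x in Ω, |φ x|) := by
    have hi1 := int_term1 hε hWt01 hWtc hu₁ hφi
    have hi2 := int_term1 hε hWt01 hWtc hu₂ hφi
    have hsub : (∫ x in Ω, (1 / ε) * Wt (u₁ x) * φ x) - (∫ x in Ω, (1 / ε) * Wt (u₂ x) * φ x)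
        = ∫ x in Ω, ((1 / ε) * Wt (u₁ x) * φ x - (1 / ε) * Wt (u₂ x) * φ x) :=
      (integral_sub hi1 hi2).symm
    have habs : |∫ x in Ω, ((1 / ε) * Wt (u₁ x) * φ x - (1 / ε) * Wt (u₂ x) * φ x)| ≤
        ∫ x in Ω, |( (1 / ε) * Wt (u₁ x) * φ x - (1 / ε) * Wt (u₂ x) * φ x)| := by
      simpa only [Real.norm_eq_abs] using
        norm_integral_le_integral_norm (μ := volume.restrict Ω)
          (f := fun x => (1 / ε) * Wt (u₁ x) * φ x - (1 / ε) * Wt (u₂ x) * φ x)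
    have hmono : (∫ x in Ω, |( (1 / ε) * Wt (u₁ x) * φ x - (1 / ε) * Wt (u₂ x) * φ x)|) ≤
        ∫ x in Ω, (L * M * (1 / ε)) * |φ x| := by
      apply setIntegral_mono_on (hi1.sub hi2).abs (hφi.abs.const_mul _) hΩm
      intro x hx
      simp only [Pi.sub_apply]
      have : (1 / ε) * Wt (u₁ x) * φ x - (1 / ε) * Wt (u₂ x) * φ x
          = ((1 / ε) * (Wt (u₁ x) - Wt (u₂ x))) * φ x := by ring
      rw [this, abs_mul, abs_mul, abs_of_pos (by positivity : (0:ℝ) < 1/ε)]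
      have hW : |Wt (u₁ x) - Wt (u₂ x)| ≤ L * M :=
        le_trans (hWtLip _ _) (mul_le_mul_of_nonneg_left (hd x hx) hL)
      calc (1 / ε) * |Wt (u₁ x) - Wt (u₂ x)| * |φ x| ≤ (1 / ε) * (L * M) * |φ x| := by
            gcongr
        _ = L * M * (1 / ε) * |φ x| := by ring
    have hconst : (∫ x in Ω, (L * M * (1 / ε)) * |φ x|) = L * M * ((1 / ε) * ∫ x in Ω, |φ x|) := by
      rw [integral_const_mul]; ring
    have := abs_sub_abs_le_abs_sub (∫ x in Ω, (1 / ε) * Wt (u₁ x) * φ x)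
      (∫ x in Ω, (1 / ε) * Wt (u₂ x) * φ x)
    rw [hsub] at this
    linarith [le_trans habs (le_of_le_of_eq hmono hconst)]
  -- Term 2
  have h2 : (∫ x in Ω, (9 * ε ^ (-(3 : ℝ) / 2) * Wt (lamb * u₁ x) + ε) * W (φ x)) ≤
      (∫ x in Ω, (9 * ε ^ (-(3 : ℝ) / 2) * Wt (lamb * u₂ x) + ε) * W (φ x)) +
        L * M * (9 * ε ^ (-(3:ℝ)/2) * ∫ x in Ω, W (φ x)) := by
    have hi2 := int_coef_mul (lamb := lamb) hε hWt01 hWtc hu₂ hWi 9 (by norm_num)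
    have hmono : (∫ x in Ω, (9 * ε ^ (-(3 : ℝ) / 2) * Wt (lamb * u₁ x) + ε) * W (φ x)) ≤
        ∫ x in Ω, ((9 * ε ^ (-(3 : ℝ) / 2) * Wt (lamb * u₂ x) + ε) * W (φ x)
          + (L * M * (9 * ε ^ (-(3:ℝ)/2))) * W (φ x)) := by
      apply setIntegral_mono_on (int_coef_mul hε hWt01 hWtc hu₁ hWi 9 (by norm_num))
        (hi2.add (hWi.const_mul _)) hΩm
      intro x hx
      simp only [Pi.add_apply]
      have hw := W_nonneg (φ x)
      have hp := hpt x hx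
      nlinarith [mul_le_mul_of_nonneg_left (mul_le_mul_of_nonneg_right hp hw) hc.le]
    calc _ ≤ _ := hmono
      _ = (∫ x in Ω, (9 * ε ^ (-(3 : ℝ) / 2) * Wt (lamb * u₂ x) + ε) * W (φ x)) +
          ∫ x in Ω, (L * M * (9 * ε ^ (-(3:ℝ)/2))) * W (φ x) :=
        integral_add hi2 (hWi.const_mul _)
      _ = _ := by rw [integral_const_mul]; ring
  -- Term 3
  have h3 : (∫ x in Ω, (8 * ε ^ (-(3 : ℝ) / 2) * Wt (lamb * u₁ x) + ε) * ‖fderiv ℝ φ x‖ ^ 2) ≤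
      (∫ x in Ω, (8 * ε ^ (-(3 : ℝ) / 2) * Wt (lamb * u₂ x) + ε) * ‖fderiv ℝ φ x‖ ^ 2) +
        L * M * (8 * ε ^ (-(3:ℝ)/2) * ∫ x in Ω, ‖fderiv ℝ φ x‖ ^ 2) := by
    have hi2 := int_coef_mul (lamb := lamb) hε hWt01 hWtc hu₂ hGi 8 (by norm_num)
    have hmono : (∫ x in Ω, (8 * ε ^ (-(3 : ℝ) / 2) * Wt (lamb * u₁ x) + ε) * ‖fderiv ℝ φ x‖ ^ 2) ≤
        ∫ x in Ω, ((8 * ε ^ (-(3 : ℝ) / 2) * Wt (lamb * u₂ x) + ε) * ‖fderiv ℝ φ x‖ ^ 2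
          + (L * M * (8 * ε ^ (-(3:ℝ)/2))) * ‖fderiv ℝ φ x‖ ^ 2) := by
      apply setIntegral_mono_on (int_coef_mul hε hWt01 hWtc hu₁ hGi 8 (by norm_num))
        (hi2.add (hGi.const_mul _)) hΩm
      intro x hx
      simp only [Pi.add_apply]
      have hg : (0:ℝ) ≤ ‖fderiv ℝ φ x‖ ^ 2 := by positivity
      have hp := hpt x hx
      nlinarith [mul_le_mul_of_nonneg_left (mul_le_mul_of_nonneg_right hp hg) hc.le]
    calc _ ≤ _ := hmono
      _ = (∫ x in Ω, (8 * ε ^ (-(3 : ℝ) / 2) * Wt (lamb * u₂ x) + ε) * ‖fderiv ℝ φ x‖ ^ 2) +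
          ∫ x in Ω, (L * M * (8 * ε ^ (-(3:ℝ)/2))) * ‖fderiv ℝ φ x‖ ^ 2 :=
        integral_add hi2 (hGi.const_mul _)
      _ = _ := by rw [integral_const_mul]; ring
  unfold Afun
  linarith

end helpers

/-- The map `u ↦ inf_φ A_{u,ε}(φ)` is Lipschitz continuous in the supremum norm, with a
constant depending only on `ε`, the Lipschitz constant `L` of `W̃`, and `Ω`. -/
theorem infA_lipschitz (n : ℕ) (hn : 1 ≤ n)
    (Ω : Set (EuclideanSpace ℝ (Fin n))) (hΩo : IsOpen Ω) (hΩb : Bornology.IsBounded Ω)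
    (ε : ℝ) (hε : 0 < ε) (lamb : ℝ) (hlamb : lamb ∈ Set.Ioo (0 : ℝ) 1)
    (Wt : ℝ → ℝ) (L : ℝ) (hL : 0 ≤ L)
    (hWt01 : ∀ s, Wt s ∈ Set.Icc (0 : ℝ) 1)
    (hWtLip : ∀ s t : ℝ, |Wt s - Wt t| ≤ L * |s - t|) :
    ∃ C : ℝ, 0 < C ∧
      ∀ u₁ u₂ : EuclideanSpace ℝ (Fin n) → ℝ,
        Continuous u₁ → (∃ M, ∀ x, |u₁ x| ≤ M) →
        Continuous u₂ → (∃ M, ∀ x, |u₂ x| ≤ M) →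
        ∀ M : ℝ, 0 ≤ M → (∀ x ∈ Ω, |u₁ x - u₂ x| ≤ M) →
          |sInf ((fun φ => Afun Ω ε lamb Wt u₁ φ) '' AdmSet Ω) -
              sInf ((fun φ => Afun Ω ε lamb Wt u₂ φ) '' AdmSet Ω)| ≤ C * M := by
  obtain ⟨hl0, hl1⟩ := hlamb
  have hΩm : MeasurableSet Ω := hΩo.measurableSet
  have hμ : volume Ω < ⊤ := hΩb.measure_lt_top
  have hWtc : Continuous Wt := by
    have : LipschitzWith L.toNNReal Wt := by
      apply LipschitzWith.of_dist_le_mul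
      intro x y
      rw [Real.dist_eq, Real.dist_eq, Real.coe_toNNReal L hL]
      exact hWtLip x y
    exact this.continuous
  have hc : 0 < ε ^ (-(3:ℝ)/2) := Real.rpow_pos_of_pos hε _
  set c : ℝ := ε ^ (-(3:ℝ)/2) with hcdef
  set v : ℝ := (volume Ω).toReal with hvdef
  have hv : 0 ≤ v := ENNReal.toReal_nonneg
  set K : ℝ := (9 * c + ε) / 4 * v with hKdef
  have hK : 0 ≤ K := by positivity
  set C : ℝ := 1 + L * ((1 / ε) * (3 * v + (K + 1) / ε) + 9 * c * ((K + 1) / ε)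
    + 8 * c * ((K + 1) / ε)) with hCdef
  have hC0 : 0 < C := by
    rw [hCdef]
    have : 0 ≤ L * ((1 / ε) * (3 * v + (K + 1) / ε) + 9 * c * ((K + 1) / ε)
        + 8 * c * ((K + 1) / ε)) := by positivity
    linarith
  refine ⟨C, hC0, ?_⟩
  have key : ∀ u₁ u₂ : EuclideanSpace ℝ (Fin n) → ℝ, Continuous u₁ → Continuous u₂ →
      ∀ M : ℝ, 0 ≤ M → (∀ x ∈ Ω, |u₁ x - u₂ x| ≤ M) →
      sInf ((fun φ => Afun Ω ε lamb Wt u₁ φ) '' AdmSet Ω) ≤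
        sInf ((fun φ => Afun Ω ε lamb Wt u₂ φ) '' AdmSet Ω) + C * M := by
    intro u₁ u₂ hu₁ hu₂ M hM hd
    have hne₂ : ((fun φ => Afun Ω ε lamb Wt u₂ φ) '' AdmSet Ω).Nonempty :=
      ⟨_, Set.mem_image_of_mem _ (zero_mem_AdmSet hμ)⟩
    have hbdd₁ : BddBelow ((fun φ => Afun Ω ε lamb Wt u₁ φ) '' AdmSet Ω) := by
      refine ⟨0, ?_⟩
      rintro a ⟨φ, -, rfl⟩
      exact Afun_nonneg hΩm hε hWt01 u₁ φ
    have hbdd₂ : BddBelow ((fun φ => Afun Ω ε lamb Wt u₂ φ) '' AdmSet Ω) := by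
      refine ⟨0, ?_⟩
      rintro a ⟨φ, -, rfl⟩
      exact Afun_nonneg hΩm hε hWt01 u₂ φ
    have hsInf₂_le : sInf ((fun φ => Afun Ω ε lamb Wt u₂ φ) '' AdmSet Ω) ≤ K := by
      refine le_trans (csInf_le hbdd₂ (Set.mem_image_of_mem _ (zero_mem_AdmSet hμ))) ?_
      exact Afun_zero_le hΩm hμ hε hWt01 hWtc hu₂
    apply le_of_forall_pos_le_add
    intro δ hδ
    obtain ⟨a, ha, halt⟩ := Real.lt_sInf_add_pos hne₂ (lt_min hδ one_pos)
    obtain ⟨φ, hφAdm, rfl⟩ := ha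
    simp only at halt
    have hA2le : Afun Ω ε lamb Wt u₂ φ ≤ K + 1 := by
      have : min δ 1 ≤ 1 := min_le_right _ _
      linarith
    -- bounds on the three integrals
    obtain ⟨-, hφi, hWi, hGi⟩ := id hφAdm
    have hWnn : 0 ≤ ∫ x in Ω, W (φ x) :=
      setIntegral_nonneg hΩm fun x _ => W_nonneg _
    have hGnn : 0 ≤ ∫ x in Ω, ‖fderiv ℝ φ x‖ ^ 2 :=
      setIntegral_nonneg hΩm fun x _ => by positivity
    have hIW : (∫ x in Ω, W (φ x)) ≤ (K + 1) / ε := by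
      rw [le_div_iff₀ hε, mul_comm]
      exact le_trans (intW_le hΩm hε hWt01 hWtc hu₂ hφAdm) hA2le
    have hIG : (∫ x in Ω, ‖fderiv ℝ φ x‖ ^ 2) ≤ (K + 1) / ε := by
      rw [le_div_iff₀ hε, mul_comm]
      exact le_trans (intG_le hΩm hε hWt01 hWtc hu₂ hφAdm) hA2le
    have hIA : (∫ x in Ω, |φ x|) ≤ 3 * v + (K + 1) / ε := by
      have := int_abs_le hΩm hμ hφi hWi
      rw [← hvdef] at this
      linarith
    have hIAnn : 0 ≤ ∫ x in Ω, |φ x| :=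
      setIntegral_nonneg hΩm fun x _ => abs_nonneg _
    have hstep := Afun_diff_le hΩm hε hl0 hl1 hL hWt01 hWtLip hWtc hu₁ hu₂ hφAdm hM hd
    have hB : (1 / ε) * (∫ x in Ω, |φ x|) + 9 * c * (∫ x in Ω, W (φ x))
        + 8 * c * (∫ x in Ω, ‖fderiv ℝ φ x‖ ^ 2)
        ≤ (1 / ε) * (3 * v + (K + 1) / ε) + 9 * c * ((K + 1) / ε) + 8 * c * ((K + 1) / ε) := by
      have h1ε : (0:ℝ) < 1/ε := by positivity
      gcongr
    have hLMB : L * M * ((1 / ε) * (∫ x in Ω, |φ x|) + 9 * c * (∫ x in Ω, W (φ x))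
        + 8 * c * (∫ x in Ω, ‖fderiv ℝ φ x‖ ^ 2)) ≤ (C - 1) * M := by
      have hLM : 0 ≤ L * M := mul_nonneg hL hM
      calc L * M * _ ≤ L * M * ((1 / ε) * (3 * v + (K + 1) / ε) + 9 * c * ((K + 1) / ε)
            + 8 * c * ((K + 1) / ε)) := mul_le_mul_of_nonneg_left hB hLM
        _ = (C - 1) * M := by rw [hCdef]; ring
    have hsInf₁_le : sInf ((fun φ' => Afun Ω ε lamb Wt u₁ φ') '' AdmSet Ω) ≤
        Afun Ω ε lamb Wt u₁ φ := csInf_le hbdd₁ (Set.mem_image_of_mem _ hφAdm)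
    have hmin : min δ 1 ≤ δ := min_le_left _ _
    have hCM : (C - 1) * M ≤ C * M := by nlinarith
    rw [← hcdef] at hstep
    have hstep2 : Afun Ω ε lamb Wt u₁ φ ≤ Afun Ω ε lamb Wt u₂ φ + (C - 1) * M :=
      le_trans hstep (add_le_add le_rfl hLMB)
    have h1 : sInf ((fun φ' => Afun Ω ε lamb Wt u₁ φ') '' AdmSet Ω) ≤
        sInf ((fun φ' => Afun Ω ε lamb Wt u₂ φ') '' AdmSet Ω) + δ + C * M := by
      linarith
    linarith
  intro u₁ u₂ hu₁ _ hu₂ _ M hM hd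
  rw [abs_sub_le_iff]
  constructor
  · linarith [key u₁ u₂ hu₁ hu₂ M hM hd]
  · have hd' : ∀ x ∈ Ω, |u₂ x - u₁ x| ≤ M := fun x hx => by
      rw [abs_sub_comm]; exact hd x hx
    linarith [key u₂ u₁ hu₂ hu₁ M hM hd']
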